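/- Let N be an abelian group, H a monoid, (E,φ) a compatible pair and g a factor set. For a function t* : H → N with t*(1) = 1, the map t([n],h) = ([t*(h)·n], h) on N ⋊_{E,φ}^g H is a monoid homomorphism if and only if t* is a crossed homomorphism relative to (E,φ), i.e. t*(h·h') ∼^{h·h'} t*(h)·φ(h, t*(h')) for all h,h' ∈ H. -/
import Mathlib


/-- An admissible H-indexed equivalence relation E on N: for each h an equivalence
relation ∼^h on N such that ∼^1 is equality, left multiplication preserves ∼^h, and
n ∼^h n' implies n ∼^{h·y} n'. -/
structure IndexedEqv (H N : Type*) [Monoid H] [Monoid N] where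
  r : H → N → N → Prop
  iseqv : ∀ h, Equivalence (r h)
  one_eq : ∀ {n n' : N}, r 1 n n' → n = n'
  mul_left : ∀ (x : N) {h : H} {n n' : N}, r h n n' → r h (x * n) (x * n')
  mul_right : ∀ (y : H) {h : H} {n n' : N}, r h n n' → r (h * y) n n'

def IndexedEqv.setoid {H N : Type*} [Monoid H] [Monoid N] (E : IndexedEqv H N) (h : H) :
    Setoid N := ⟨E.r h, E.iseqv h⟩

/-- α : H × N → N is a compatible action for the admissible indexed equivalence relation E. -/
structure CompatibleAction {H N : Type*} [Monoid H] [Monoid N] (E : IndexedEqv H N)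
    (α : H → N → N) : Prop where
  c1 : ∀ (h : H) (n n' x : N), E.r h n n' → E.r h (n * α h x) (n' * α h x)
  c2 : ∀ (h : H) (n n' : N) (x : H), E.r h n n' → E.r (x * h) (α x n) (α x n')
  c3 : ∀ (h : H) (n n' : N), E.r h (α h (n * n')) (α h n * α h n')
  c4 : ∀ (h h' : H) (n : N), E.r (h * h') (α (h * h') n) (α h (α h' n))
  c5 : ∀ h : H, E.r h (α h 1) 1
  c6 : ∀ n : N, E.r 1 (α 1 n) n

/-- The carrier ⨆_{h ∈ H} N/∼^h of the weak semidirect product. -/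
def WProd {H N : Type*} [Monoid H] [Monoid N] (E : IndexedEqv H N) : Type _ :=
  (h : H) × Quotient (E.setoid h)

/-- The element ([n], h). -/
def wmk {H N : Type*} [Monoid H] [Monoid N] (E : IndexedEqv H N) (h : H) (n : N) : WProd E :=
  ⟨h, Quotient.mk (E.setoid h) n⟩

/-- The multiplication ([n],h)·([n'],h') = ([n·α(h,n')], h·h') of the weak semidirect
product N ⋊_{E,α} H. -/
def wmul {H N : Type*} [Monoid H] [Monoid N] (E : IndexedEqv H N) {α : H → N → N}
    (hα : CompatibleAction E α) : WProd E → WProd E → WProd E :=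
  fun x y =>
    ⟨x.1 * y.1,
      Quotient.liftOn₂ x.2 y.2
        (fun n n' => Quotient.mk (E.setoid (x.1 * y.1)) (n * α x.1 n'))
        (fun a c b d hab hcd =>
          Quotient.sound
            ((E.iseqv (x.1 * y.1)).trans
              (E.mul_right y.1 (hα.c1 x.1 a b c hab))
              (E.mul_left b (hα.c2 y.1 c d x.1 hcd))))⟩

/-- A factor set relative to the compatible pair (E, α), with abelian group kernel N:
g(h,1) ∼^h 1 ∼^h g(1,h) and g(x,y)·g(xy,z) ∼^{xyz} α(x, g(y,z))·g(x, yz). -/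
def IsFactorSet {H N : Type*} [Monoid H] [CommGroup N] (E : IndexedEqv H N)
    (α : H → N → N) (g : H → H → N) : Prop :=
  (∀ h : H, E.r h (g h 1) 1) ∧ (∀ h : H, E.r h (g 1 h) 1) ∧
  ∀ x y z : H, E.r (x * y * z) (g x y * g (x * y) z) (α x (g y z) * g x (y * z))

/-- The multiplication ([n],h)·([n'],h') = ([n·α(h,n')·g(h,h')], h·h') of
N ⋊_{E,α}^g H. -/
def wgmul {H N : Type*} [Monoid H] [CommGroup N] (E : IndexedEqv H N) {α : H → N → N}
    (g : H → H → N) (hα : CompatibleAction E α) : WProd E → WProd E → WProd E :=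
  fun x y =>
    ⟨x.1 * y.1,
      Quotient.liftOn₂ x.2 y.2
        (fun n n' => Quotient.mk (E.setoid (x.1 * y.1)) (n * α x.1 n' * g x.1 y.1))
        (by
          intro a c b d hab hcd
          apply Quotient.sound
          have h1 : E.r (x.1 * y.1) (a * α x.1 c) (b * α x.1 d) :=
            (E.iseqv _).trans (E.mul_right y.1 (hα.c1 x.1 a b c hab))
              (E.mul_left b (hα.c2 y.1 c d x.1 hcd))
          have h2 := E.mul_left (g x.1 y.1) h1
          show E.r (x.1 * y.1) (a * α x.1 c * g x.1 y.1) (b * α x.1 d * g x.1 y.1)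
          simpa [mul_comm, mul_assoc, mul_left_comm] using h2)⟩

/-- The map ([n],h) ↦ ([t(h)·n],h) on the weak semidirect product (well defined since left
multiplication preserves ∼^h). -/
def tmap {H N : Type*} [Monoid H] [Monoid N] (E : IndexedEqv H N) (t : H → N) :
    WProd E → WProd E :=
  fun x =>
    ⟨x.1,
      Quotient.liftOn x.2 (fun n => Quotient.mk (E.setoid x.1) (t x.1 * n))
        (fun a b hab => Quotient.sound (E.mul_left (t x.1) hab))⟩

/-- For t* : H → N with t*(1) = 1, the map t([n],h) = ([t*(h)·n],h) on
N ⋊_{E,α}^g H is a monoid homomorphism if and only if t* is a crossed homomorphism relative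
to (E,α), i.e. t*(h·h') ∼^{h·h'} t*(h)·α(h, t*(h')). -/

lemma wmk_eq_iff {H N : Type*} [Monoid H] [Monoid N] (E : IndexedEqv H N) (h : H)
    (n n' : N) : wmk E h n = wmk E h n' ↔ E.r h n n' := by
  constructor
  · intro heq
    have h2 : HEq (Quotient.mk (E.setoid h) n) (Quotient.mk (E.setoid h) n') :=
      (Sigma.mk.inj_iff.mp heq).2
    exact Quotient.exact (eq_of_heq h2)
  · intro hr
    exact congrArg (fun q => (⟨h, q⟩ : WProd E)) (Quotient.sound hr)

lemma wgmul_wmk {H N : Type*} [Monoid H] [CommGroup N] (E : IndexedEqv H N) {α : H → N → N}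
    (g : H → H → N) (hα : CompatibleAction E α) (h h' : H) (n n' : N) :
    wgmul E g hα (wmk E h n) (wmk E h' n') = wmk E (h * h') (n * α h n' * g h h') := rfl

lemma tmap_wmk {H N : Type*} [Monoid H] [Monoid N] (E : IndexedEqv H N) (t : H → N)
    (h : H) (n : N) : tmap E t (wmk E h n) = wmk E h (t h * n) := rfl

theorem tmap_hom_iff_crossed_hom {H N : Type*} [Monoid H] [CommGroup N]
    (E : IndexedEqv H N) (α : H → N → N) (hα : CompatibleAction E α)
    (g : H → H → N) (hg : IsFactorSet E α g)
    (t : H → N) (ht1 : t 1 = 1) :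
    ((∀ x y : WProd E, tmap E t (wgmul E g hα x y) = wgmul E g hα (tmap E t x) (tmap E t y)) ∧
      tmap E t (wmk E 1 1) = wmk E 1 1) ↔
    ∀ h h' : H, E.r (h * h') (t (h * h')) (t h * α h (t h')) := by
  have rcongr : ∀ {h : H} {a b a' b' : N}, E.r h a b → a = a' → b = b' → E.r h a' b' := by
    rintro h a b a' b' hr rfl rfl; exact hr
  constructor
  · rintro ⟨hhom, -⟩ h h'
    have key := hhom (wmk E h 1) (wmk E h' 1)
    rw [wgmul_wmk, tmap_wmk, tmap_wmk, tmap_wmk, wgmul_wmk, wmk_eq_iff] at key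
    have h5 : E.r (h * h') (α h 1) 1 := E.mul_right h' (hα.c5 h)
    have step1 : E.r (h * h') (t (h * h') * g h h')
        (t (h * h') * (1 * α h 1 * g h h')) :=
      rcongr (E.mul_left (t (h * h') * g h h') ((E.iseqv _).symm h5))
        (by simp [mul_comm, mul_assoc, mul_left_comm]) (by simp [mul_comm, mul_assoc, mul_left_comm])
    have comb : E.r (h * h') (t (h * h') * g h h') (t h * α h (t h') * g h h') :=
      (E.iseqv _).trans step1 (rcongr key rfl (by simp [mul_comm, mul_assoc, mul_left_comm]))
    exact rcongr (E.mul_left (g h h')⁻¹ comb)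
      (by rw [mul_comm (t (h * h')) (g h h'), inv_mul_cancel_left])
      (by rw [mul_comm (t h * α h (t h')) (g h h'), inv_mul_cancel_left])
  · intro hch
    constructor
    · intro x y
      obtain ⟨h, q⟩ := x
      obtain ⟨h', q'⟩ := y
      induction q using Quotient.ind with | _ n =>
      induction q' using Quotient.ind with | _ n' =>
      show tmap E t (wgmul E g hα (wmk E h n) (wmk E h' n')) =
        wgmul E g hα (tmap E t (wmk E h n)) (tmap E t (wmk E h' n'))
      rw [wgmul_wmk, tmap_wmk, tmap_wmk, tmap_wmk, wgmul_wmk, wmk_eq_iff]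
      have hc3 : E.r (h * h') (α h (t h' * n')) (α h (t h') * α h n') :=
        E.mul_right h' (hα.c3 h (t h') n')
      have s1 : E.r (h * h') (t (h * h') * (n * α h n' * g h h'))
          (t h * α h (t h') * (n * α h n' * g h h')) :=
        rcongr (E.mul_left (n * α h n' * g h h') (hch h h')) (by simp [mul_comm, mul_assoc, mul_left_comm]) (by simp [mul_comm, mul_assoc, mul_left_comm])
      have s2 : E.r (h * h') (t h * α h (t h') * (n * α h n' * g h h'))
          (t h * n * α h (t h' * n') * g h h') :=
        rcongr (E.mul_left (t h * n * g h h') ((E.iseqv _).symm hc3))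
          (by simp [mul_comm, mul_assoc, mul_left_comm]) (by simp [mul_comm, mul_assoc, mul_left_comm])
      exact (E.iseqv _).trans s1 s2
    · rw [tmap_wmk, ht1, one_mul]
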